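/- Let W : ℝ^d × M^{m×d} → [0,∞] be Borel measurable and 1-periodic in its first variable, and let G : M^{m×d} → [0,∞] and β > 0 satisfy W(x,ξ) ≤ β(1 + G(ξ)) for all (x,ξ). For ξ ∈ M^{m×d} define 𝒮_ξ(A) := inf { ∫_A W(x, ξ + ∇φ(x)) dx : φ ∈ W^{1,p}_0(A;ℝ^m) } for bounded open A ⊂ ℝ^d. Then 𝒮_ξ is subadditive, ℤ^d-invariant, and satisfies 𝒮_ξ(A) ≤ β(1 + G(ξ))|A|; consequently, for every ξ with G(ξ) < ∞ and every open cube Q, lim_{ε→0} 𝒮_ξ((1/ε)Q)/|(1/ε)Q| = inf_{k≥1} 𝒮_ξ(kY)/k^d with Y = (0,1)^d. -/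

import Mathlib

open MeasureTheory ENNReal Filter Pointwise Bornology

noncomputable instance {m d : ℕ} : MeasurableSpace (Matrix (Fin m) (Fin d) ℝ) := borel _
instance {m d : ℕ} : BorelSpace (Matrix (Fin m) (Fin d) ℝ) := ⟨rfl⟩

/-- The open cube `(0,k)^d` in `ℝ^d`. -/
def cube (d : ℕ) (k : ℕ) : Set (EuclideanSpace ℝ (Fin d)) :=
  {x | ∀ i, x i ∈ Set.Ioo (0 : ℝ) (k : ℝ)}

/-- The gradient matrix `∇φ(x)` of a map `φ : ℝ^d → ℝ^m`. -/
noncomputable def gradMat {d m : ℕ} (φ : EuclideanSpace ℝ (Fin d) → EuclideanSpace ℝ (Fin m))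
    (x : EuclideanSpace ℝ (Fin d)) : Matrix (Fin m) (Fin d) ℝ :=
  Matrix.of fun i j => fderiv ℝ φ x (EuclideanSpace.single j 1) i

/-- A model for `W^{1,p}_0(A;ℝ^m)`. -/
def W1p0 {d m : ℕ} (p : ℝ≥0∞) (A : Set (EuclideanSpace ℝ (Fin d))) :
    Set (EuclideanSpace ℝ (Fin d) → EuclideanSpace ℝ (Fin m)) :=
  {φ | ContDiff ℝ 1 φ ∧ tsupport φ ⊆ A ∧ MeasureTheory.MemLp φ p ∧
    MeasureTheory.MemLp (fun x => fderiv ℝ φ x) p}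

/-- The Dirichlet set function `𝒮_ξ(A)`. -/
noncomputable def dirichletSetFn {d m : ℕ} (p : ℝ≥0∞)
    (W : EuclideanSpace ℝ (Fin d) → Matrix (Fin m) (Fin d) ℝ → ℝ≥0∞)
    (ξ : Matrix (Fin m) (Fin d) ℝ) (A : Set (EuclideanSpace ℝ (Fin d))) : ℝ≥0∞ :=
  ⨅ φ ∈ W1p0 (d := d) (m := m) p A, ∫⁻ x in A, W x (ξ + gradMat φ x)


open Set Topology

variable {d : ℕ}

/-- open cube with corner `a` and side `t` -/
def Qc (a : Fin d → ℝ) (t : ℝ) : Set (EuclideanSpace ℝ (Fin d)) :=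
  {x | ∀ i, x i ∈ Set.Ioo (a i) (a i + t)}

def QcC (a : Fin d → ℝ) (t : ℝ) : Set (EuclideanSpace ℝ (Fin d)) :=
  {x | ∀ i, x i ∈ Set.Icc (a i) (a i + t)}

lemma isOpen_Qc (a : Fin d → ℝ) (t : ℝ) : IsOpen (Qc a t) := by
  have : Qc a t = ⋂ i, (fun x : EuclideanSpace ℝ (Fin d) => x i) ⁻¹' Set.Ioo (a i) (a i + t) := by
    ext x; simp [Qc]
  rw [this]
  exact isOpen_iInter_of_finite fun i =>
    (isOpen_Ioo).preimage (EuclideanSpace.proj i).continuous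

lemma isCompact_QcC (a : Fin d → ℝ) (t : ℝ) : IsCompact (QcC a t) := by
  have : QcC a t =
      (PiLp.continuousLinearEquiv 2 ℝ (fun _ : Fin d => ℝ)).symm '' (Set.univ.pi fun i => Set.Icc (a i) (a i + t)) := by
    ext x
    constructor
    · intro hx
      refine ⟨(PiLp.continuousLinearEquiv 2 ℝ (fun _ : Fin d => ℝ)) x, ?_, by simp⟩
      intro i _
      exact hx i
    · rintro ⟨y, hy, rfl⟩
      intro i
      exact hy i (Set.mem_univ i)
  rw [this]
  exact ((isCompact_univ_pi fun i => isCompact_Icc).image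
    (PiLp.continuousLinearEquiv 2 ℝ (fun _ : Fin d => ℝ)).symm.continuous)

lemma Qc_subset_QcC (a : Fin d → ℝ) (t : ℝ) : Qc a t ⊆ QcC a t :=
  fun x hx i => Set.Ioo_subset_Icc_self (hx i)

lemma closure_Qc_subset (a : Fin d → ℝ) (t : ℝ) : closure (Qc a t) ⊆ QcC a t :=
  closure_minimal (Qc_subset_QcC a t) (isCompact_QcC a t).isClosed

lemma isBounded_Qc (a : Fin d → ℝ) (t : ℝ) : IsBounded (Qc a t) :=
  (isCompact_QcC a t).isBounded.subset (Qc_subset_QcC a t)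

lemma Qc_eq_preimage (a : Fin d → ℝ) (t : ℝ) :
    Qc a t = ((MeasurableEquiv.toLp 2 (Fin d → ℝ)).symm) ⁻¹' (Set.univ.pi fun i => Set.Ioo (a i) (a i + t)) := by
  ext x; simp [Qc, Set.mem_pi]

lemma volume_Qc (a : Fin d → ℝ) (t : ℝ) :
    volume (Qc a t) = ENNReal.ofReal t ^ d := by
  rw [Qc_eq_preimage,
    (EuclideanSpace.volume_preserving_symm_measurableEquiv_toLp (Fin d)).measure_preimage
      (MeasurableSet.univ_pi fun i => measurableSet_Ioo).nullMeasurableSet]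
  simp [volume_pi_pi, Real.volume_Ioo]

lemma volume_QcC (a : Fin d → ℝ) (t : ℝ) (ht : 0 ≤ t) :
    volume (QcC a t) = ENNReal.ofReal t ^ d := by
  have : QcC a t = ((MeasurableEquiv.toLp 2 (Fin d → ℝ)).symm) ⁻¹' (Set.univ.pi fun i => Set.Icc (a i) (a i + t)) := by
    ext x; simp [QcC, Set.mem_pi, Pi.le_def, forall_and]
  rw [this,
    (EuclideanSpace.volume_preserving_symm_measurableEquiv_toLp (Fin d)).measure_preimage
      (MeasurableSet.univ_pi fun i => measurableSet_Icc).nullMeasurableSet]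
  simp [Real.volume_Icc_pi]

lemma volume_frontier_Qc (a : Fin d → ℝ) (t : ℝ) :
    volume (closure (Qc a t) \ Qc a t) = 0 := by
  rcases Nat.eq_zero_or_pos d with hd | hd
  · subst hd
    have : Qc a t = closure (Qc a t) := by
      rcases isEmpty_or_nonempty (EuclideanSpace ℝ (Fin 0)) with h | h
      · exact Subsingleton.elim _ _
      · have : Qc a t = Set.univ := by ext x; simp [Qc]
        rw [this, closure_univ]
    rw [← this, Set.diff_self]; simp
  rcases le_or_gt t 0 with ht | ht
  · have : Qc a t = ∅ := by
      ext x; simp only [Qc, Set.mem_setOf_eq, Set.mem_empty_iff_false, iff_false]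
      intro h
      obtain ⟨i⟩ := Fin.pos_iff_nonempty.mp hd
      have := h i; simp only [Set.mem_Ioo] at this; linarith [this.1, this.2]
    rw [this]; simp
  · have h1 : volume (closure (Qc a t)) ≤ ENNReal.ofReal t ^ d := by
      calc volume (closure (Qc a t)) ≤ volume (QcC a t) := measure_mono (closure_Qc_subset a t)
        _ = ENNReal.ofReal t ^ d := volume_QcC a t ht.le
    have h2 : volume (Qc a t) = ENNReal.ofReal t ^ d := volume_Qc a t
    have hfin : volume (Qc a t) ≠ ⊤ := by rw [h2]; exact (ENNReal.pow_ne_top ofReal_ne_top)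
    rw [measure_diff subset_closure ((isOpen_Qc a t).measurableSet).nullMeasurableSet hfin, h2]
    exact tsub_eq_zero_of_le h1

lemma add_apply' (x v : EuclideanSpace ℝ (Fin d)) (i : Fin d) : (x + v) i = x i + v i := rfl

lemma image_add_Qc (v : EuclideanSpace ℝ (Fin d)) (a : Fin d → ℝ) (t : ℝ) :
    (fun x => x + v) '' Qc a t = Qc (fun i => a i + v i) t := by
  ext x
  constructor
  · rintro ⟨y, hy, rfl⟩ i
    have := hy i
    simp only [Set.mem_Ioo] at this ⊢
    rw [add_apply']
    constructor <;> [linarith [this.1]; linarith [this.2]]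
  · intro hx
    refine ⟨x - v, fun i => ?_, by simp⟩
    have := hx i
    simp only [Set.mem_Ioo] at this ⊢
    have hxi : (x - v) i = x i - v i := rfl
    rw [hxi]
    constructor <;> [linarith [this.1]; linarith [this.2]]

lemma smul_Qc (ε : ℝ) (hε : 0 < ε) (a : Fin d → ℝ) (t : ℝ) :
    (1/ε) • Qc a t = Qc (fun i => a i / ε) (t / ε) := by
  ext x
  rw [Set.mem_smul_set_iff_inv_smul_mem₀ (by positivity : (1/ε : ℝ) ≠ 0)]
  simp only [one_div, inv_inv]
  constructor
  · intro hx i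
    have := hx i
    have hxi : (ε • x) i = ε * x i := rfl
    rw [hxi] at this
    simp only [Set.mem_Ioo] at this ⊢
    constructor
    · rw [div_lt_iff₀ hε]; linarith [this.1]
    · rw [← add_div, lt_div_iff₀ hε]; linarith [this.2]
  · intro hx i
    have := hx i
    have hxi : (ε • x) i = ε * x i := rfl
    simp only [Set.mem_Ioo] at this ⊢
    rw [hxi]
    constructor
    · calc a i = (a i / ε) * ε := by field_simp
        _ < x i * ε := by exact mul_lt_mul_of_pos_right this.1 hε
        _ = ε * x i := mul_comm _ _
    · calc ε * x i = x i * ε := mul_comm _ _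
        _ < (a i / ε + t / ε) * ε := mul_lt_mul_of_pos_right this.2 hε
        _ = a i + t := by field_simp

/-- the open lattice cube with corner `k • z` -/
def latCube (k : ℕ) (z : Fin d → ℤ) : Set (EuclideanSpace ℝ (Fin d)) :=
  Qc (fun i => (k : ℝ) * (z i : ℝ)) (k : ℝ)

lemma latCube_disjoint_closure {k : ℕ} (hk : 0 < k) {z z' : Fin d → ℤ} (h : z ≠ z') :
    Disjoint (latCube k z) (closure (latCube k z')) := by
  obtain ⟨i, hi⟩ := Function.ne_iff.mp h
  rw [Set.disjoint_left]
  intro x hx hx'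
  have h1 := hx i
  have h2 := closure_Qc_subset _ _ hx' i
  simp only [Set.mem_Ioo, Set.mem_Icc] at h1 h2
  have hkpos : (0:ℝ) < k := by exact_mod_cast hk
  rcases lt_or_gt_of_ne hi with hlt | hlt
  · have : (z i : ℝ) + 1 ≤ (z' i : ℝ) := by exact_mod_cast hlt
    nlinarith [h1.2, h2.1]
  · have : (z' i : ℝ) + 1 ≤ (z i : ℝ) := by exact_mod_cast hlt
    nlinarith [h1.1, h2.2]

/-- corners of lattice cubes of side `k` contained in `Qc a t` -/
noncomputable def latCorners (k : ℕ) (a : Fin d → ℝ) (t : ℝ) : Finset (Fin d → ℤ) :=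
  Fintype.piFinset fun i => Finset.Icc ⌈a i / k⌉ (⌊(a i + t) / k⌋ - 1)

lemma mem_latCorners {k : ℕ} {a : Fin d → ℝ} {t : ℝ} {z : Fin d → ℤ} :
    z ∈ latCorners k a t ↔ ∀ i, ⌈a i / k⌉ ≤ z i ∧ z i ≤ ⌊(a i + t) / k⌋ - 1 := by
  simp [latCorners, Fintype.mem_piFinset, Finset.mem_Icc]

lemma latCube_subset_of_mem {k : ℕ} (hk : 0 < k) {a : Fin d → ℝ} {t : ℝ} {z : Fin d → ℤ}
    (hz : z ∈ latCorners k a t) : latCube k z ⊆ Qc a t := by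
  intro x hx i
  have h := hx i
  have hb := (mem_latCorners.mp hz) i
  have hkpos : (0:ℝ) < k := by exact_mod_cast hk
  simp only [Set.mem_Ioo] at h ⊢
  have h1 : a i / k ≤ (z i : ℝ) := le_trans (Int.le_ceil _) (by exact_mod_cast hb.1)
  have h1' : a i ≤ k * z i := by rw [div_le_iff₀ hkpos] at h1; linarith
  have h2 : (z i : ℝ) + 1 ≤ (a i + t) / k := by
    have : ((z i : ℤ) + 1 : ℤ) ≤ ⌊(a i + t) / k⌋ := by omega
    calc ((z i : ℝ) + 1) = ((z i + 1 : ℤ) : ℝ) := by push_cast; ring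
      _ ≤ (⌊(a i + t) / k⌋ : ℝ) := by exact_mod_cast this
      _ ≤ (a i + t) / k := Int.floor_le _
  have h2' : k * z i + k ≤ a i + t := by
    rw [le_div_iff₀ hkpos] at h2; linarith
  exact ⟨lt_of_le_of_lt h1' h.1, lt_of_lt_of_le h.2 h2'⟩

lemma coordFactor_lower {k : ℕ} (hk : 0 < k) {t : ℝ} (ht : 2 * k ≤ t) (a : ℝ) :
    t - 2 * k ≤ (k : ℝ) * ((⌊(a + t) / k⌋ - 1 + 1 - ⌈a / k⌉).toNat : ℝ) := by
  have hkpos : (0:ℝ) < k := by exact_mod_cast hk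
  have h1 : (⌈a / k⌉ : ℝ) < a / k + 1 := Int.ceil_lt_add_one _
  have h2 : (a + t) / k - 1 < (⌊(a + t) / k⌋ : ℝ) := Int.sub_one_lt_floor _
  have hdiff : (t / k - 2 : ℝ) < (⌊(a + t) / k⌋ : ℝ) - (⌈a / k⌉ : ℝ) := by
    have : (a + t) / k = a / k + t / k := add_div a t k
    linarith
  have htk : (0:ℝ) ≤ t / k - 2 := by
    rw [le_sub_iff_add_le, zero_add, le_div_iff₀ hkpos]; linarith
  have hnn : (0:ℤ) ≤ ⌊(a + t) / k⌋ - ⌈a / k⌉ := by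
    by_contra hcon
    push_neg at hcon
    have : (⌊(a + t) / k⌋ : ℝ) - (⌈a / k⌉ : ℝ) < 0 := by
      have : ((⌊(a + t) / k⌋ - ⌈a / k⌉ : ℤ) : ℝ) < 0 := by exact_mod_cast hcon
      push_cast at this; linarith
    linarith
  have : ((⌊(a + t) / k⌋ - 1 + 1 - ⌈a / k⌉).toNat : ℝ) = (⌊(a + t) / k⌋ : ℝ) - (⌈a / k⌉ : ℝ) := by
    have : (⌊(a + t) / k⌋ - 1 + 1 - ⌈a / k⌉) = ⌊(a + t) / k⌋ - ⌈a / k⌉ := by ring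
    rw [this]
    exact_mod_cast congrArg (fun n : ℤ => (n : ℝ)) (Int.toNat_of_nonneg hnn)
  rw [this]
  have : t / k - 2 ≤ (⌊(a + t) / k⌋ : ℝ) - (⌈a / k⌉ : ℝ) := le_of_lt hdiff
  calc t - 2 * k = k * (t / k - 2) := by field_simp
    _ ≤ k * ((⌊(a + t) / k⌋ : ℝ) - (⌈a / k⌉ : ℝ)) := by
        exact mul_le_mul_of_nonneg_left this (le_of_lt hkpos)

lemma card_latCorners_lower {k : ℕ} (hk : 0 < k) {a : Fin d → ℝ} {t : ℝ} (ht : 2 * k ≤ t) :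
    (t - 2 * k) ^ d ≤ ((latCorners k a t).card : ℝ) * (k : ℝ) ^ d := by
  have hcard : ((latCorners k a t).card : ℝ) = ∏ i : Fin d, ((⌊(a i + t) / k⌋ - 1 + 1 - ⌈a i / k⌉).toNat : ℝ) := by
    rw [latCorners, Fintype.card_piFinset]
    push_cast
    congr 1; ext i; rw [Int.card_Icc]
  rw [hcard]
  have hkd : (k:ℝ) ^ d = ∏ _i : Fin d, (k : ℝ) := by
    rw [Finset.prod_const, Finset.card_univ, Fintype.card_fin]
  rw [hkd, ← Finset.prod_mul_distrib]
  have : (t - 2 * k) ^ d = ∏ _i : Fin d, (t - 2 * (k:ℝ)) := by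
    rw [Finset.prod_const, Finset.card_univ, Fintype.card_fin]
  rw [this]
  apply Finset.prod_le_prod
  · intro i _; linarith
  · intro i _
    calc t - 2 * (k:ℝ) ≤ (k : ℝ) * ((⌊(a i + t) / k⌋ - 1 + 1 - ⌈a i / k⌉).toNat : ℝ) :=
        coordFactor_lower hk ht (a i)
      _ = _ := mul_comm _ _

lemma volume_biUnion_latCubes {k : ℕ} (hk : 0 < k) (Z : Finset (Fin d → ℤ)) :
    volume (⋃ z ∈ Z, latCube k z) = (Z.card : ℝ≥0∞) * ENNReal.ofReal k ^ d := by
  rw [measure_biUnion_finset]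
  · simp only [latCube, volume_Qc]
    rw [Finset.sum_const, nsmul_eq_mul]
  · intro z hz z' hz' hne
    exact (latCube_disjoint_closure hk hne).mono_right subset_closure
  · intro z _; exact (isOpen_Qc _ _).measurableSet

lemma card_latCorners_upper {k : ℕ} (hk : 0 < k) (a : Fin d → ℝ) (t : ℝ) :
    ((latCorners k a t).card : ℝ≥0∞) * ENNReal.ofReal k ^ d ≤ ENNReal.ofReal t ^ d := by
  rw [← volume_biUnion_latCubes hk, ← volume_Qc a t]
  exact measure_mono (Set.iUnion₂_subset fun z hz => latCube_subset_of_mem hk hz)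

lemma volume_leftover {k : ℕ} (hk : 0 < k) (a : Fin d → ℝ) (t : ℝ) :
    volume (Qc a t \ ⋃ z ∈ latCorners k a t, closure (latCube k z))
      ≤ ENNReal.ofReal t ^ d - ((latCorners k a t).card : ℝ≥0∞) * ENNReal.ofReal k ^ d := by
  have h1 : Qc a t \ ⋃ z ∈ latCorners k a t, closure (latCube k z)
      ⊆ Qc a t \ ⋃ z ∈ latCorners k a t, latCube k z :=
    Set.diff_subset_diff_right (Set.iUnion₂_mono fun z hz => subset_closure)
  calc volume (Qc a t \ ⋃ z ∈ latCorners k a t, closure (latCube k z))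
      ≤ volume (Qc a t \ ⋃ z ∈ latCorners k a t, latCube k z) := measure_mono h1
    _ = volume (Qc a t) - volume (⋃ z ∈ latCorners k a t, latCube k z) := by
        apply measure_diff
        · exact Set.iUnion₂_subset fun z hz => latCube_subset_of_mem hk hz
        · exact (MeasurableSet.biUnion (latCorners k a t).countable_toSet
            fun z hz => (isOpen_Qc _ _).measurableSet).nullMeasurableSet
        · rw [volume_biUnion_latCubes hk]
          exact ENNReal.mul_ne_top (by simp) (ENNReal.pow_ne_top ofReal_ne_top)
    _ = _ := by rw [volume_Qc, volume_biUnion_latCubes hk]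

lemma cube_eq_Qc (k : ℕ) : cube d k = Qc (fun _ => 0) (k : ℝ) := by
  ext x; simp [cube, Qc]

lemma equiv_symm_apply (f : Fin d → ℝ) (i : Fin d) :
    ((WithLp.equiv 2 (Fin d → ℝ)).symm f) i = f i := rfl

section Abstract

variable {S : Set (EuclideanSpace ℝ (Fin d)) → ℝ≥0∞} {c : ℝ≥0∞}

variable (Hsub : ∀ A B C : Set (EuclideanSpace ℝ (Fin d)),
    IsOpen A → IsBounded A → IsOpen B → IsOpen C → B ⊆ A → C ⊆ A → Disjoint B C →
    volume (A \ (B ∪ C)) = 0 → S A ≤ S B + S C)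
  (Hinv : ∀ (A : Set (EuclideanSpace ℝ (Fin d))) (z : Fin d → ℤ), IsOpen A → IsBounded A →
    S ((fun x => x + (WithLp.equiv 2 (Fin d → ℝ)).symm fun i => (z i : ℝ)) '' A) = S A)
  (Hbound : ∀ A : Set (EuclideanSpace ℝ (Fin d)), IsOpen A → IsBounded A →
    S A ≤ c * volume A)

include Hinv in
lemma S_Qc_translate (a : Fin d → ℝ) (t : ℝ) (z : Fin d → ℤ) :
    S (Qc (fun i => a i + (z i : ℝ)) t) = S (Qc a t) := by
  have := Hinv (Qc a t) z (isOpen_Qc a t) (isBounded_Qc a t)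
  rw [← this]
  congr 1
  rw [show (fun x : EuclideanSpace ℝ (Fin d) =>
      x + (WithLp.equiv 2 (Fin d → ℝ)).symm fun i => (z i : ℝ)) ''  Qc a t
    = Qc (fun i => a i + ((WithLp.equiv 2 (Fin d → ℝ)).symm fun i => (z i : ℝ)) i) t from
    image_add_Qc _ a t]
  rfl

include Hinv in
lemma S_latCube (k : ℕ) (z : Fin d → ℤ) : S (latCube k z) = S (cube d k) := by
  rw [cube_eq_Qc]
  have := S_Qc_translate Hinv (fun _ => (0:ℝ)) (k : ℝ) (fun i => (k : ℤ) * z i)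
  rw [← this]
  congr 1
  ext x
  simp only [latCube, Qc, Set.mem_setOf_eq]
  constructor <;> · intro h i; have := h i; push_cast at this ⊢; convert this using 2 <;> ring

include Hsub Hinv Hbound in
lemma peel {k : ℕ} (hk : 0 < k) :
    ∀ (Z : Finset (Fin d → ℤ)) (A : Set (EuclideanSpace ℝ (Fin d))), IsOpen A → IsBounded A →
    (∀ z ∈ Z, latCube k z ⊆ A) →
    S A ≤ (Z.card : ℝ≥0∞) * S (cube d k) + c * volume (A \ ⋃ z ∈ Z, closure (latCube k z)) := by
  intro Z
  induction Z using Finset.induction_on with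
  | empty =>
    intro A hAo hAb _
    simpa using Hbound A hAo hAb
  | @insert z Z hz IH =>
    intro A hAo hAb hsubs
    set B := latCube k z with hB
    set C := interior (A \ closure B) with hC
    have hBo : IsOpen B := isOpen_Qc _ _
    have hBA : B ⊆ A := hsubs z (Finset.mem_insert_self z Z)
    have hCo : IsOpen C := isOpen_interior
    have hCA : C ⊆ A := interior_subset.trans Set.diff_subset
    have hdisj : Disjoint B C := by
      rw [Set.disjoint_left]
      intro x hx hx'
      exact (interior_subset hx').2 (subset_closure hx)
    have hnull : volume (A \ (B ∪ C)) = 0 := by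
      apply measure_mono_null ?_ (volume_frontier_Qc (fun i => (k : ℝ) * (z i : ℝ)) (k : ℝ))
      intro x hx
      rcases hx with ⟨hxA, hxBC⟩
      simp only [Set.mem_union, not_or] at hxBC
      by_cases hcl : x ∈ closure B
      · exact ⟨hcl, hxBC.1⟩
      · exact absurd ((hAo.sdiff isClosed_closure).subset_interior_iff.mpr
          Set.Subset.rfl ⟨hxA, hcl⟩) hxBC.2
    have step := Hsub A B C hAo hAb hBo hCo hBA hCA hdisj hnull
    have hcubesC : ∀ z' ∈ Z, latCube k z' ⊆ C := by
      intro z' hz'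
      have hne : z' ≠ z := fun h => hz (h ▸ hz')
      have hd := latCube_disjoint_closure hk hne (z := z') (z' := z)
      have : latCube k z' ⊆ A \ closure B := fun x hx =>
        ⟨hsubs z' (Finset.mem_insert_of_mem hz') hx, fun hc' => (Set.disjoint_left.mp hd hx) hc'⟩
      exact (isOpen_Qc _ _).subset_interior_iff.mpr this
    have hIH := IH C hCo (hAb.subset hCA) hcubesC
    have hvol : volume (C \ ⋃ z' ∈ Z, closure (latCube k z'))
        ≤ volume (A \ ⋃ z' ∈ insert z Z, closure (latCube k z')) := by
      apply measure_mono
      intro x hx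
      refine ⟨hCA hx.1, ?_⟩
      intro hmem
      simp only [Set.mem_iUnion, exists_prop] at hmem
      obtain ⟨z'', hz'', hxz''⟩ := hmem
      rcases Finset.mem_insert.mp hz'' with rfl | hz''Z
      · exact (interior_subset hx.1).2 hxz''
      · exact hx.2 (Set.mem_biUnion hz''Z hxz'')
    calc S A ≤ S B + S C := step
      _ ≤ S (cube d k) + ((Z.card : ℝ≥0∞) * S (cube d k)
            + c * volume (C \ ⋃ z' ∈ Z, closure (latCube k z'))) := by
          rw [hB, S_latCube Hinv]
          exact add_le_add le_rfl hIH
      _ ≤ S (cube d k) + ((Z.card : ℝ≥0∞) * S (cube d k)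
            + c * volume (A \ ⋃ z' ∈ insert z Z, closure (latCube k z'))) := by
          gcongr
      _ = ((insert z Z).card : ℝ≥0∞) * S (cube d k)
            + c * volume (A \ ⋃ z' ∈ insert z Z, closure (latCube k z')) := by
          rw [Finset.card_insert_of_notMem hz]
          push_cast
          ring

include Hsub Hinv Hbound in
lemma S_upper {k : ℕ} (hk : 0 < k) (a : Fin d → ℝ) {t : ℝ} (ht : 2 * k ≤ t) :
    S (Qc a t) ≤ ENNReal.ofReal t ^ d * (S (cube d k) / ENNReal.ofReal (k:ℝ) ^ d)
      + c * (ENNReal.ofReal t ^ d - ENNReal.ofReal (t - 2 * k) ^ d) := by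
  set Z := latCorners k a t with hZ
  have hpeel := peel Hsub Hinv Hbound hk Z (Qc a t) (isOpen_Qc _ _) (isBounded_Qc _ _)
    (fun z hz => latCube_subset_of_mem hk hz)
  set K := ENNReal.ofReal (k:ℝ) ^ d with hK
  have hkR : (0:ℝ) < (k:ℝ) := by exact_mod_cast hk
  have hK0 : K ≠ 0 := pow_ne_zero _ (ne_of_gt (ENNReal.ofReal_pos.mpr hkR))
  have hKtop : K ≠ ⊤ := ENNReal.pow_ne_top ofReal_ne_top
  have h1 : (Z.card : ℝ≥0∞) * S (cube d k) ≤ ENNReal.ofReal t ^ d * (S (cube d k) / K) := by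
    have he : (Z.card : ℝ≥0∞) * S (cube d k) = ((Z.card : ℝ≥0∞) * K) * (S (cube d k) / K) := by
      rw [mul_assoc, ENNReal.mul_div_cancel hK0 hKtop]
    rw [he]
    exact mul_le_mul_left (card_latCorners_upper hk a t) _
  have h2 : volume (Qc a t \ ⋃ z ∈ Z, closure (latCube k z))
      ≤ ENNReal.ofReal t ^ d - ENNReal.ofReal (t - 2 * k) ^ d := by
    refine le_trans (volume_leftover hk a t) ?_
    apply tsub_le_tsub_left
    have hreal := card_latCorners_lower hk (a := a) ht
    calc ENNReal.ofReal (t - 2 * k) ^ d = ENNReal.ofReal ((t - 2 * k) ^ d) :=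
        (ENNReal.ofReal_pow (by linarith) d).symm
      _ ≤ ENNReal.ofReal ((Z.card : ℝ) * (k:ℝ) ^ d) := ENNReal.ofReal_le_ofReal hreal
      _ = (Z.card : ℝ≥0∞) * K := by
          rw [ENNReal.ofReal_mul (by positivity), ENNReal.ofReal_pow hkR.le,
            ENNReal.ofReal_natCast]
  calc S (Qc a t) ≤ (Z.card : ℝ≥0∞) * S (cube d k)
        + c * volume (Qc a t \ ⋃ z ∈ Z, closure (latCube k z)) := hpeel
    _ ≤ _ := add_le_add h1 (mul_le_mul_right h2 c)

include Hsub Hinv Hbound in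
lemma S_lower (a : Fin d → ℝ) {t : ℝ} (ht : 0 < t) :
    S (cube d (⌈t⌉₊ + 2)) ≤ S (Qc a t)
      + c * (ENNReal.ofReal ((⌈t⌉₊ + 2 : ℕ) : ℝ) ^ d - ENNReal.ofReal t ^ d) := by
  set k' := ⌈t⌉₊ + 2 with hk'
  set A := Qc (fun i => (⌊a i⌋ : ℝ)) (k' : ℝ) with hA
  have hSA : S A = S (cube d k') := by
    rw [cube_eq_Qc]
    have h := S_Qc_translate Hinv (fun _ => (0:ℝ)) (k' : ℝ) (fun i => ⌊a i⌋)
    rw [← h]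
    congr 1
    ext x
    simp only [hA, Qc, Set.mem_setOf_eq, zero_add]
  set B := Qc a t with hB
  have hBA : B ⊆ A := by
    intro x hx i
    have h := hx i
    simp only [Set.mem_Ioo] at h ⊢
    have h1 : (⌊a i⌋ : ℝ) ≤ a i := Int.floor_le _
    have h2 : a i + t ≤ (⌊a i⌋ : ℝ) + k' := by
      have hc1 : (t:ℝ) ≤ (⌈t⌉₊ : ℝ) := Nat.le_ceil t
      have hc2 : a i - 1 < (⌊a i⌋ : ℝ) := Int.sub_one_lt_floor (a i)
      have : ((k' : ℕ) : ℝ) = (⌈t⌉₊ : ℝ) + 2 := by rw [hk']; push_cast; ring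
      rw [this]; linarith
    exact ⟨lt_of_le_of_lt h1 h.1, lt_of_lt_of_le h.2 h2⟩
  set C := interior (A \ closure B) with hC
  have hAo : IsOpen A := isOpen_Qc _ _
  have hAb : IsBounded A := isBounded_Qc _ _
  have hCo : IsOpen C := isOpen_interior
  have hCA : C ⊆ A := interior_subset.trans Set.diff_subset
  have hdisj : Disjoint B C := by
    rw [Set.disjoint_left]
    intro x hx hx'
    exact (interior_subset hx').2 (subset_closure hx)
  have hnull : volume (A \ (B ∪ C)) = 0 := by
    apply measure_mono_null ?_ (volume_frontier_Qc a t)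
    intro x hx
    rcases hx with ⟨hxA, hxBC⟩
    simp only [Set.mem_union, not_or] at hxBC
    by_cases hcl : x ∈ closure B
    · exact ⟨hcl, hxBC.1⟩
    · exact absurd ((hAo.sdiff isClosed_closure).subset_interior_iff.mpr
        Set.Subset.rfl ⟨hxA, hcl⟩) hxBC.2
  have hstep := Hsub A B C hAo hAb (isOpen_Qc _ _) hCo hBA hCA hdisj hnull
  have hvolC : volume C ≤ ENNReal.ofReal ((k' : ℕ) : ℝ) ^ d - ENNReal.ofReal t ^ d := by
    have hCsub : C ⊆ A \ B := interior_subset.trans (Set.diff_subset_diff_right subset_closure)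
    calc volume C ≤ volume (A \ B) := measure_mono hCsub
      _ = volume A - volume B := measure_diff hBA
          (isOpen_Qc a t).measurableSet.nullMeasurableSet
          (by rw [hB, volume_Qc]; exact ENNReal.pow_ne_top ofReal_ne_top)
      _ = _ := by rw [hA, hB, volume_Qc, volume_Qc]
  calc S (cube d k') = S A := hSA.symm
    _ ≤ S B + S C := hstep
    _ ≤ S B + c * volume C := add_le_add le_rfl (Hbound C hCo (hAb.subset hCA))
    _ ≤ _ := add_le_add le_rfl (mul_le_mul_right hvolC c)

include Hsub Hinv Hbound in
lemma key_estimate (hc : c ≠ ⊤) {η : ℝ≥0∞} (hη : 0 < η) :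
    ∃ T : ℝ, 1 ≤ T ∧ ∀ (a : Fin d → ℝ) (t : ℝ), T ≤ t →
      S (Qc a t) / volume (Qc a t) ∈
        Set.Icc ((⨅ k : ℕ, ⨅ _ : 1 ≤ k, S (cube d k) / (k : ℝ≥0∞) ^ d) - η)
          ((⨅ k : ℕ, ⨅ _ : 1 ≤ k, S (cube d k) / (k : ℝ≥0∞) ^ d) + η) := by
  set μ := ⨅ k : ℕ, ⨅ _ : 1 ≤ k, S (cube d k) / (k : ℝ≥0∞) ^ d with hμ
  have hScube : ∀ k : ℕ, S (cube d k) ≤ c * ENNReal.ofReal (k:ℝ) ^ d := by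
    intro k
    have h := Hbound (Qc (fun _ => (0:ℝ)) (k:ℝ)) (isOpen_Qc _ _) (isBounded_Qc _ _)
    rw [volume_Qc] at h
    rw [cube_eq_Qc]
    exact h
  have hμc : μ ≤ c := by
    refine le_trans (iInf₂_le 1 le_rfl) ?_
    have h := hScube 1
    simp only [Nat.cast_one, ENNReal.ofReal_one, one_pow, mul_one] at h
    exact ENNReal.div_le_of_le_mul (by simpa using h)
  have hμtop : μ ≠ ⊤ := (lt_of_le_of_lt hμc hc.lt_top).ne
  -- choose k
  have hη2 : (η / 2 : ℝ≥0∞) ≠ 0 := by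
    simp [ENNReal.div_eq_zero_iff, hη.ne']
  have hlt : μ < μ + η / 2 := ENNReal.lt_add_right hμtop hη2
  rw [hμ] at hlt
  obtain ⟨k, hk⟩ := iInf_lt_iff.mp hlt
  obtain ⟨hk1, hkclose⟩ := iInf_lt_iff.mp hk
  have hk0 : 0 < k := hk1
  have hkR : (0:ℝ) < (k:ℝ) := by exact_mod_cast hk0
  -- real epsilon
  set ηr := ((min η 1) / 2).toReal with hηr
  have hmin0 : (min η 1 : ℝ≥0∞) ≠ 0 := (lt_min hη zero_lt_one).ne'
  have hmintop : (min η 1 : ℝ≥0∞) / 2 ≠ ⊤ := by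
    apply ne_top_of_le_ne_top (ENNReal.one_ne_top)
    calc (min η 1) / 2 ≤ 1 / 2 := by gcongr; exact min_le_right _ _
      _ ≤ 1 := ENNReal.half_le_self
  have hηrpos : 0 < ηr := by
    apply ENNReal.toReal_pos _ hmintop
    simp [ENNReal.div_eq_zero_iff, hmin0]
  have hηENN : ENNReal.ofReal ηr ≤ η / 2 := by
    rw [hηr, ENNReal.ofReal_toReal hmintop]
    gcongr
    exact min_le_left _ _
  set ctR := c.toReal with hctR
  -- tendsto facts
  have f1 : Tendsto (fun t : ℝ => ctR * (1 - ((t - 2 * k) / t) ^ d)) atTop (𝓝 0) := by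
    have h0 : Tendsto (fun t : ℝ => (t - 2 * k) / t) atTop (𝓝 1) := by
      have : ∀ᶠ t : ℝ in atTop, 1 - (2 * k) / t = (t - 2 * k) / t := by
        filter_upwards [eventually_ne_atTop 0] with t ht
        field_simp
      refine Tendsto.congr' this ?_
      have := Tendsto.div_atTop (tendsto_const_nhds (x := (2 * k : ℝ))) tendsto_id
      have h2 := Tendsto.const_sub (1:ℝ) this
      simpa using h2
    have h1 := (h0.pow d).const_sub (1:ℝ)
    have h2 := h1.const_mul ctR
    simpa using h2
  have f2 : Tendsto (fun t : ℝ => ctR * (((t + 3) / t) ^ d - 1)) atTop (𝓝 0) := by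
    have h0 : Tendsto (fun t : ℝ => (t + 3) / t) atTop (𝓝 1) := by
      have : ∀ᶠ t : ℝ in atTop, 1 + 3 / t = (t + 3) / t := by
        filter_upwards [eventually_ne_atTop 0] with t ht
        field_simp
      refine Tendsto.congr' this ?_
      have := Tendsto.div_atTop (tendsto_const_nhds (x := (3 : ℝ))) tendsto_id
      have h2 := Tendsto.const_add (1:ℝ) this
      simpa using h2
    have h1 := (h0.pow d).sub_const (1:ℝ)
    have h2 := h1.const_mul ctR
    simpa using h2
  obtain ⟨T1, hT1⟩ := eventually_atTop.mp (f1.eventually_lt_const hηrpos)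
  obtain ⟨T2, hT2⟩ := eventually_atTop.mp (f2.eventually_lt_const hηrpos)
  refine ⟨max (max T1 T2) (max (2 * k + 1) 1), le_trans (le_max_right _ _) (le_max_right _ _), ?_⟩
  intro a t hT
  have ht1 : T1 ≤ t := le_trans (le_trans (le_max_left _ _) (le_max_left _ _)) hT
  have ht2 : T2 ≤ t := le_trans (le_trans (le_max_right _ _) (le_max_left _ _)) hT
  have htk : 2 * k + 1 ≤ t := le_trans (le_trans (le_max_left _ _) (le_max_right _ _)) hT
  have ht0 : (0:ℝ) < t := lt_of_lt_of_le (by positivity) htk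
  have htk' : 2 * (k:ℝ) ≤ t := by linarith
  set V := ENNReal.ofReal t ^ d with hV
  have hV0 : V ≠ 0 := pow_ne_zero _ (ne_of_gt (ENNReal.ofReal_pos.mpr ht0))
  have hVtop : V ≠ ⊤ := ENNReal.pow_ne_top ofReal_ne_top
  have hvolQc : volume (Qc a t) = V := volume_Qc a t
  -- error bound 1 (upper)
  have herr1 : c * (V - ENNReal.ofReal (t - 2 * k) ^ d) ≤ (η / 2) * V := by
    have hr1 : ctR * (t ^ d - (t - 2 * k) ^ d) ≤ ηr * t ^ d := by
      have h := le_of_lt (hT1 t ht1)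
      have hq : ((t - 2 * k) / t) ^ d * t ^ d = (t - 2 * k) ^ d := by
        rw [← mul_pow, div_mul_cancel₀ _ (ne_of_gt ht0)]
      have htd : (0:ℝ) < t ^ d := by positivity
      have hA := mul_le_mul_of_nonneg_right h htd.le
      have hq2 : ctR * (((t - 2 * k) / t) ^ d * t ^ d) = ctR * (t - 2 * k) ^ d := by rw [hq]
      nlinarith [hA, hq2]
    calc c * (V - ENNReal.ofReal (t - 2 * k) ^ d)
        = c * ENNReal.ofReal (t ^ d - (t - 2 * k) ^ d) := by
          rw [hV, ← ENNReal.ofReal_pow ht0.le, ← ENNReal.ofReal_pow (by linarith),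
            ← ENNReal.ofReal_sub _ (pow_nonneg (by linarith) d)]
      _ = ENNReal.ofReal (ctR * (t ^ d - (t - 2 * k) ^ d)) := by
          rw [ENNReal.ofReal_mul ENNReal.toReal_nonneg, ENNReal.ofReal_toReal hc]
      _ ≤ ENNReal.ofReal (ηr * t ^ d) := ENNReal.ofReal_le_ofReal hr1
      _ = ENNReal.ofReal ηr * ENNReal.ofReal (t ^ d) := ENNReal.ofReal_mul hηrpos.le
      _ ≤ (η / 2) * V := by
          rw [hV, ← ENNReal.ofReal_pow ht0.le]
          exact mul_le_mul_left hηENN _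
  -- error bound 2 (lower)
  set k' := ⌈t⌉₊ + 2 with hk'def
  set K' := ENNReal.ofReal ((k' : ℕ) : ℝ) ^ d with hK'
  have hk'le : ((k' : ℕ) : ℝ) ≤ t + 3 := by
    have := Nat.ceil_lt_add_one ht0.le
    push_cast [hk'def]
    linarith
  have htlek' : t ≤ ((k' : ℕ) : ℝ) := by
    have := Nat.le_ceil t
    push_cast [hk'def]
    linarith
  have hVK' : V ≤ K' := by
    rw [hV, hK']
    gcongr
  have herr2 : c * (K' - V) ≤ (η / 2) * V := by
    have hr2 : ctR * ((t + 3) ^ d - t ^ d) ≤ ηr * t ^ d := by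
      have h := le_of_lt (hT2 t ht2)
      have hq : ((t + 3) / t) ^ d * t ^ d = (t + 3) ^ d := by
        rw [← mul_pow, div_mul_cancel₀ _ (ne_of_gt ht0)]
      have htd : (0:ℝ) < t ^ d := by positivity
      have hA := mul_le_mul_of_nonneg_right h htd.le
      have hq2 : ctR * (((t + 3) / t) ^ d * t ^ d) = ctR * (t + 3) ^ d := by rw [hq]
      nlinarith [hA, hq2]
    calc c * (K' - V)
        ≤ c * (ENNReal.ofReal (t + 3) ^ d - V) := by
          refine mul_le_mul_right (tsub_le_tsub_right ?_ V) c
          rw [hK']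
          gcongr
      _ = c * ENNReal.ofReal ((t + 3) ^ d - t ^ d) := by
          rw [hV, ← ENNReal.ofReal_pow ht0.le, ← ENNReal.ofReal_pow (by linarith),
            ← ENNReal.ofReal_sub _ (pow_nonneg ht0.le d)]
      _ = ENNReal.ofReal (ctR * ((t + 3) ^ d - t ^ d)) := by
          rw [ENNReal.ofReal_mul ENNReal.toReal_nonneg, ENNReal.ofReal_toReal hc]
      _ ≤ ENNReal.ofReal (ηr * t ^ d) := ENNReal.ofReal_le_ofReal hr2
      _ = ENNReal.ofReal ηr * ENNReal.ofReal (t ^ d) := ENNReal.ofReal_mul hηrpos.le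
      _ ≤ (η / 2) * V := by
          rw [hV, ← ENNReal.ofReal_pow ht0.le]
          exact mul_le_mul_left hηENN _
  have hSfin : S (Qc a t) ≠ ⊤ := by
    refine ne_top_of_le_ne_top ?_ (Hbound _ (isOpen_Qc _ _) (isBounded_Qc _ _))
    rw [hvolQc]
    exact ENNReal.mul_ne_top hc hVtop
  constructor
  · -- lower bound : μ - η ≤ S / V
    rw [tsub_le_iff_right]
    have hμk' : μ * K' ≤ S (cube d k') := by
      have h1 : μ ≤ S (cube d k') / (k' : ℝ≥0∞) ^ d := iInf₂_le k' (by omega)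
      have : ((k' : ℕ) : ℝ≥0∞) ^ d = K' := by
        rw [hK', ENNReal.ofReal_natCast]
      rw [← this]
      rw [ENNReal.le_div_iff_mul_le
        (Or.inl (pow_ne_zero _ (Nat.cast_ne_zero.mpr (by omega))))
        (Or.inl (ENNReal.pow_ne_top (ENNReal.natCast_ne_top _)))] at h1
      exact h1
    have hlow := S_lower Hsub Hinv Hbound a ht0
    rw [← hk'def] at hlow
    have chain : μ * V ≤ (S (Qc a t) / volume (Qc a t) + η) * V := by
      calc μ * V ≤ μ * K' := mul_le_mul_right hVK' μ
        _ ≤ S (cube d k') := hμk'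
        _ ≤ S (Qc a t) + c * (K' - V) := hlow
        _ ≤ S (Qc a t) + (η / 2) * V := add_le_add le_rfl herr2
        _ ≤ S (Qc a t) + η * V := by
            exact add_le_add le_rfl (mul_le_mul_left ENNReal.half_le_self V)
        _ = (S (Qc a t) / volume (Qc a t)) * V + η * V := by
            rw [hvolQc, ENNReal.div_mul_cancel hV0 hVtop]
        _ = (S (Qc a t) / volume (Qc a t) + η) * V := by ring
    exact (ENNReal.mul_le_mul_iff_left hV0 hVtop).mp chain
  · -- upper bound : S / V ≤ μ + η
    have hup := S_upper Hsub Hinv Hbound hk0 a htk'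
    have hch : S (Qc a t) ≤ (μ + η) * V := by
      calc S (Qc a t) ≤ V * (S (cube d k) / ENNReal.ofReal (k:ℝ) ^ d)
            + c * (V - ENNReal.ofReal (t - 2 * k) ^ d) := hup
        _ ≤ V * (μ + η / 2) + (η / 2) * V := by
            refine add_le_add (mul_le_mul_right ?_ V) herr1
            rw [show ENNReal.ofReal (k:ℝ) = ((k:ℕ) : ℝ≥0∞) from ENNReal.ofReal_natCast k]
            exact le_of_lt hkclose
        _ = (μ + η / 2 + η / 2) * V := by ring
        _ = (μ + η) * V := by rw [add_assoc, ENNReal.add_halves]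
    rw [hvolQc]
    exact ENNReal.div_le_of_le_mul hch

include Hsub Hinv Hbound in
lemma abstract_limit (hc : c ≠ ⊤) (x₀ : EuclideanSpace ℝ (Fin d)) (r : ℝ) (hr : 0 < r) :
    Tendsto (fun ε : ℝ => S ((1/ε) • Qc (fun i => x₀ i) r) / volume ((1/ε) • Qc (fun i => x₀ i) r))
      (𝓝[>] (0:ℝ)) (𝓝 (⨅ k : ℕ, ⨅ _ : 1 ≤ k, S (cube d k) / (k : ℝ≥0∞) ^ d)) := by
  have hμtop : (⨅ k : ℕ, ⨅ _ : 1 ≤ k, S (cube d k) / (k : ℝ≥0∞) ^ d) ≠ ⊤ := by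
    have h := Hbound (Qc (fun _ => (0:ℝ)) ((1:ℕ):ℝ)) (isOpen_Qc _ _) (isBounded_Qc _ _)
    rw [volume_Qc] at h
    rw [← cube_eq_Qc] at h
    have hcle : (⨅ k : ℕ, ⨅ _ : 1 ≤ k, S (cube d k) / (k : ℝ≥0∞) ^ d) ≤ c := by
      refine le_trans (iInf₂_le 1 le_rfl) ?_
      refine ENNReal.div_le_of_le_mul (le_trans h ?_)
      simp
    exact ne_top_of_le_ne_top hc hcle
  rw [ENNReal.tendsto_nhds hμtop]
  intro η hη
  obtain ⟨T, hT1, hT⟩ := key_estimate Hsub Hinv Hbound hc hη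
  have htends : Tendsto (fun ε : ℝ => r / ε) (𝓝[>] (0:ℝ)) atTop := by
    have h := tendsto_inv_nhdsGT_zero (𝕜 := ℝ)
    have h2 := Tendsto.const_mul_atTop hr h
    simpa [div_eq_mul_inv] using h2
  filter_upwards [self_mem_nhdsWithin, htends.eventually (eventually_ge_atTop T)] with ε hε hεT
  have hε0 : (0:ℝ) < ε := hε
  rw [smul_Qc ε hε0 (fun i => x₀ i) r]
  exact hT _ _ hεT

end Abstract

section Dirichlet

variable {d m : ℕ} (p : ℝ≥0∞)
  (W : EuclideanSpace ℝ (Fin d) → Matrix (Fin m) (Fin d) ℝ → ℝ≥0∞)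
  (ξ : Matrix (Fin m) (Fin d) ℝ)

lemma gradMat_continuous {φ : EuclideanSpace ℝ (Fin d) → EuclideanSpace ℝ (Fin m)}
    (hφ : ContDiff ℝ 1 φ) : Continuous (gradMat φ) := by
  have h := hφ.continuous_fderiv one_ne_zero
  refine continuous_pi fun i => continuous_pi fun j => ?_
  have h1 : Continuous fun x => fderiv ℝ φ x (EuclideanSpace.single j 1) :=
    (ContinuousLinearMap.apply ℝ (EuclideanSpace ℝ (Fin m))
      (EuclideanSpace.single j 1)).continuous.comp h
  exact (EuclideanSpace.proj i).continuous.comp h1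

lemma integrand_meas (hWmeas : Measurable (Function.uncurry W))
    {φ : EuclideanSpace ℝ (Fin d) → EuclideanSpace ℝ (Fin m)} (hφ : ContDiff ℝ 1 φ) :
    Measurable fun x => W x (ξ + gradMat φ x) := by
  have hg : Measurable fun x => ξ + gradMat φ x :=
    (continuous_const.add (gradMat_continuous hφ)).measurable
  exact hWmeas.comp (measurable_id.prodMk hg)

lemma zero_mem_W1p0 (A : Set (EuclideanSpace ℝ (Fin d))) :
    (0 : EuclideanSpace ℝ (Fin d) → EuclideanSpace ℝ (Fin m)) ∈ W1p0 p A := by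
  refine ⟨contDiff_const, ?_, MemLp.zero, ?_⟩
  · have h0 : tsupport (fun _ : EuclideanSpace ℝ (Fin d) => (0 : EuclideanSpace ℝ (Fin m))) = ∅ :=
      tsupport_eq_empty_iff.mpr rfl
    exact h0 ▸ Set.empty_subset A
  · have : (fun x => fderiv ℝ (0 : EuclideanSpace ℝ (Fin d) → EuclideanSpace ℝ (Fin m)) x)
        = fun _ => (0 : EuclideanSpace ℝ (Fin d) →L[ℝ] EuclideanSpace ℝ (Fin m)) := by
      funext x
      exact fderiv_const_apply 0
    rw [this]
    exact MemLp.zero' (ε := EuclideanSpace ℝ (Fin d) →L[ℝ] EuclideanSpace ℝ (Fin m))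

lemma gradMat_zero (x : EuclideanSpace ℝ (Fin d)) :
    gradMat (0 : EuclideanSpace ℝ (Fin d) → EuclideanSpace ℝ (Fin m)) x = 0 := by
  ext i j
  simp only [gradMat, Matrix.of_apply]
  rw [show (0 : EuclideanSpace ℝ (Fin d) → EuclideanSpace ℝ (Fin m)) = fun _ => 0 from rfl,
    fderiv_const_apply]
  simp [Matrix.zero_apply]

lemma dirichlet_bound (G : Matrix (Fin m) (Fin d) ℝ → ℝ≥0∞) (β : ℝ≥0∞)
    (hgrowth : ∀ x ξ', W x ξ' ≤ β * (1 + G ξ'))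
    (A : Set (EuclideanSpace ℝ (Fin d))) :
    dirichletSetFn p W ξ A ≤ β * (1 + G ξ) * volume A := by
  refine le_trans (iInf₂_le 0 (zero_mem_W1p0 p A)) ?_
  have heq : ∀ x, W x (ξ + gradMat 0 x) = W x ξ := by
    intro x; rw [gradMat_zero, add_zero]
  calc ∫⁻ x in A, W x (ξ + gradMat 0 x) = ∫⁻ x in A, W x ξ := by
        apply lintegral_congr; exact heq
    _ ≤ ∫⁻ _ in A, β * (1 + G ξ) := lintegral_mono fun x => hgrowth x ξ
    _ = β * (1 + G ξ) * volume A := by rw [setLIntegral_const]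

lemma dirichlet_translate_le
    (hWper : ∀ (x : EuclideanSpace ℝ (Fin d)) (z : Fin d → ℤ) (ξ' : Matrix (Fin m) (Fin d) ℝ),
      W (x + (WithLp.equiv 2 (Fin d → ℝ)).symm fun i => (z i : ℝ)) ξ' = W x ξ')
    (A : Set (EuclideanSpace ℝ (Fin d))) (z : Fin d → ℤ) :
    dirichletSetFn p W ξ
        ((fun x => x + (WithLp.equiv 2 (Fin d → ℝ)).symm fun i => (z i : ℝ)) '' A)
      ≤ dirichletSetFn p W ξ A := by
  set v : EuclideanSpace ℝ (Fin d) := (WithLp.equiv 2 (Fin d → ℝ)).symm fun i => (z i : ℝ) with hv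
  rw [dirichletSetFn]
  apply le_iInf₂
  intro φ hφ
  obtain ⟨hφ1, hφ2, hφ3, hφ4⟩ := hφ
  set ψ : EuclideanSpace ℝ (Fin d) → EuclideanSpace ℝ (Fin m) := fun x => φ (x - v) with hψdef
  have hmp : MeasurePreserving (fun x : EuclideanSpace ℝ (Fin d) => x - v) volume volume := by
    simpa [sub_eq_add_neg] using measurePreserving_add_right
      (volume : Measure (EuclideanSpace ℝ (Fin d))) (-v)
  have hmp' : MeasurePreserving (fun x : EuclideanSpace ℝ (Fin d) => x + v) volume volume :=
    measurePreserving_add_right volume v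
  have hemb : MeasurableEmbedding (fun x : EuclideanSpace ℝ (Fin d) => x + v) :=
    (MeasurableEquiv.addRight v).measurableEmbedding
  have hder : ∀ x, fderiv ℝ ψ x = fderiv ℝ φ (x - v) := by
    intro x
    have h1 : HasFDerivAt (fun y : EuclideanSpace ℝ (Fin d) => y - v)
        (ContinuousLinearMap.id ℝ (EuclideanSpace ℝ (Fin d))) x := (hasFDerivAt_id x).sub_const v
    have h2 : HasFDerivAt φ (fderiv ℝ φ (x - v)) (x - v) :=
      (hφ1.differentiable one_ne_zero (x - v)).hasFDerivAt
    have h3 := h2.comp x h1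
    have := h3.fderiv
    simp only [ContinuousLinearMap.comp_id] at this
    exact this
  have hψmem : ψ ∈ W1p0 p ((fun x => x + v) '' A) := by
    refine ⟨hφ1.comp (contDiff_id.sub contDiff_const), ?_, ?_, ?_⟩
    · have hsupp : Function.support ψ ⊆ (fun x : EuclideanSpace ℝ (Fin d) => x + v) '' tsupport φ := by
        intro x hx
        exact ⟨x - v, subset_tsupport φ hx, by simp⟩
      have hcl : IsClosed ((fun x : EuclideanSpace ℝ (Fin d) => x + v) '' tsupport φ) :=
        (Homeomorph.addRight v).isClosedMap _ (isClosed_tsupport φ)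
      exact (closure_minimal hsupp hcl).trans (Set.image_mono hφ2)
    · exact hφ3.comp_measurePreserving hmp
    · have heq : (fun x => fderiv ℝ ψ x)
          = (fun y => fderiv ℝ φ y) ∘ (fun x : EuclideanSpace ℝ (Fin d) => x - v) := funext hder
      rw [heq]
      exact hφ4.comp_measurePreserving hmp
  refine le_trans (iInf₂_le ψ hψmem) (le_of_eq ?_)
  have hgm : ∀ x, gradMat ψ x = gradMat φ (x - v) := by
    intro x; unfold gradMat; rw [hder]
  calc ∫⁻ x in (fun x => x + v) '' A, W x (ξ + gradMat ψ x)
      = ∫⁻ y in A, W (y + v) (ξ + gradMat ψ (y + v)) := (hmp'.setLIntegral_comp_emb hemb _ A).symm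
    _ = ∫⁻ y in A, W y (ξ + gradMat φ y) := by
        apply lintegral_congr
        intro y
        rw [hgm, show y + v - v = y from add_sub_cancel_right y v, hv]
        exact hWper y z _

lemma v_neg (z : Fin d → ℤ) :
    ((WithLp.equiv 2 (Fin d → ℝ)).symm fun i => (((-z) i : ℤ) : ℝ))
      = -((WithLp.equiv 2 (Fin d → ℝ)).symm fun i => ((z i : ℤ) : ℝ)) := by
  ext i
  show (((-z) i : ℤ) : ℝ) = -((z i : ℤ) : ℝ)
  simp [Pi.neg_apply]

lemma dirichlet_translate_eq
    (hWper : ∀ (x : EuclideanSpace ℝ (Fin d)) (z : Fin d → ℤ) (ξ' : Matrix (Fin m) (Fin d) ℝ),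
      W (x + (WithLp.equiv 2 (Fin d → ℝ)).symm fun i => (z i : ℝ)) ξ' = W x ξ')
    (A : Set (EuclideanSpace ℝ (Fin d))) (z : Fin d → ℤ) :
    dirichletSetFn p W ξ
        ((fun x => x + (WithLp.equiv 2 (Fin d → ℝ)).symm fun i => (z i : ℝ)) '' A)
      = dirichletSetFn p W ξ A := by
  refine le_antisymm (dirichlet_translate_le p W ξ hWper A z) ?_
  have h2 := dirichlet_translate_le p W ξ hWper
    ((fun x => x + (WithLp.equiv 2 (Fin d → ℝ)).symm fun i => (z i : ℝ)) '' A) (-z)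
  rw [v_neg] at h2
  rw [Set.image_image] at h2
  simpa using h2

lemma dirichlet_subadd (hWmeas : Measurable (Function.uncurry W))
    (A B C : Set (EuclideanSpace ℝ (Fin d)))
    (hBo : IsOpen B) (hCo : IsOpen C) (hBA : B ⊆ A) (hCA : C ⊆ A) (hdisj : Disjoint B C)
    (hnull : volume (A \ (B ∪ C)) = 0) :
    dirichletSetFn p W ξ A ≤ dirichletSetFn p W ξ B + dirichletSetFn p W ξ C := by
  have key : ∀ φB ∈ W1p0 (d := d) (m := m) p B, ∀ φC ∈ W1p0 (d := d) (m := m) p C,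
      dirichletSetFn p W ξ A
        ≤ (∫⁻ x in B, W x (ξ + gradMat φB x)) + ∫⁻ x in C, W x (ξ + gradMat φC x) := by
    intro φB hφB φC hφC
    obtain ⟨hB1, hB2, hB3, hB4⟩ := hφB
    obtain ⟨hC1, hC2, hC3, hC4⟩ := hφC
    set φ : EuclideanSpace ℝ (Fin d) → EuclideanSpace ℝ (Fin m) := φB + φC with hφdef
    have hφ1 : ContDiff ℝ 1 φ := hB1.add hC1
    have hmem : φ ∈ W1p0 p A := by
      refine ⟨hφ1, ?_, hB3.add hC3, ?_⟩
      · have hsupp : Function.support φ ⊆ tsupport φB ∪ tsupport φC :=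
          (Function.support_add _ _).trans
            (Set.union_subset_union (subset_tsupport _) (subset_tsupport _))
        refine (closure_minimal hsupp
          ((isClosed_tsupport φB).union (isClosed_tsupport φC))).trans ?_
        exact (Set.union_subset_union hB2 hC2).trans (Set.union_subset hBA hCA)
      · have heq : (fun x => fderiv ℝ φ x) = fun x => fderiv ℝ φB x + fderiv ℝ φC x := by
          funext x
          exact fderiv_add ((hB1.differentiable one_ne_zero).differentiableAt)
            ((hC1.differentiable one_ne_zero).differentiableAt)
        rw [heq]
        exact MemLp.add (ε := EuclideanSpace ℝ (Fin d) →L[ℝ] EuclideanSpace ℝ (Fin m)) hB4 hC4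
    have hBgrad : ∀ x ∈ B, gradMat φ x = gradMat φB x := by
      intro x hx
      have hnot : x ∉ tsupport φC := fun hmem' =>
        Set.disjoint_left.mp hdisj hx (hC2 hmem')
      have h0 : fderiv ℝ φC x = 0 := by
        have hev := notMem_tsupport_iff_eventuallyEq.mp hnot
        rw [hev.fderiv_eq]
        exact fderiv_const_apply 0
      have h1 : fderiv ℝ φ x = fderiv ℝ φB x := by
        rw [show fderiv ℝ φ x = fderiv ℝ φB x + fderiv ℝ φC x from
          fderiv_add ((hB1.differentiable one_ne_zero).differentiableAt)
            ((hC1.differentiable one_ne_zero).differentiableAt), h0, add_zero]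
      unfold gradMat
      rw [h1]
    have hCgrad : ∀ x ∈ C, gradMat φ x = gradMat φC x := by
      intro x hx
      have hnot : x ∉ tsupport φB := fun hmem' =>
        Set.disjoint_right.mp hdisj hx (hB2 hmem')
      have h0 : fderiv ℝ φB x = 0 := by
        have hev := notMem_tsupport_iff_eventuallyEq.mp hnot
        rw [hev.fderiv_eq]
        exact fderiv_const_apply 0
      have h1 : fderiv ℝ φ x = fderiv ℝ φC x := by
        rw [show fderiv ℝ φ x = fderiv ℝ φB x + fderiv ℝ φC x from
          fderiv_add ((hB1.differentiable one_ne_zero).differentiableAt)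
            ((hC1.differentiable one_ne_zero).differentiableAt), h0, zero_add]
      unfold gradMat
      rw [h1]
    refine le_trans (iInf₂_le φ hmem) ?_
    have haeq : A =ᵐ[volume] (B ∪ C : Set (EuclideanSpace ℝ (Fin d))) := by
      rw [MeasureTheory.ae_eq_set]
      constructor
      · exact hnull
      · rw [Set.diff_eq_empty.mpr (Set.union_subset hBA hCA)]
        exact measure_empty
    calc ∫⁻ x in A, W x (ξ + gradMat φ x)
        = ∫⁻ x in B ∪ C, W x (ξ + gradMat φ x) := setLIntegral_congr haeq
      _ = (∫⁻ x in B, W x (ξ + gradMat φ x)) + ∫⁻ x in C, W x (ξ + gradMat φ x) := by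
          apply lintegral_union hCo.measurableSet hdisj
      _ ≤ _ := by
          apply add_le_add
          · apply le_of_eq
            apply setLIntegral_congr_fun hBo.measurableSet
            exact (fun x hx => by rw [hBgrad x hx])
          · apply le_of_eq
            apply setLIntegral_congr_fun hCo.measurableSet
            exact (fun x hx => by rw [hCgrad x hx])
  conv_rhs => rw [dirichletSetFn, dirichletSetFn]
  rw [ENNReal.iInf_add]
  refine le_iInf fun φB => ?_
  rw [ENNReal.iInf_add]
  refine le_iInf fun hφB => ?_
  rw [ENNReal.add_iInf]
  refine le_iInf fun φC => ?_
  rw [ENNReal.add_iInf]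
  refine le_iInf fun hφC => ?_
  exact key φB hφB φC hφC

end Dirichlet

/-- under periodicity and the growth bound `W(x,ξ) ≤ β(1+G(ξ))`, the set
function `𝒮_ξ` is subadditive, `ℤ^d`-invariant and dominated by `β(1+G(ξ))|A|`;
consequently for `G(ξ) < ∞` the cube limits exist and equal `inf_{k≥1} 𝒮_ξ(kY)/k^d`. -/
theorem dirichletSetFn_subadditive_invariant_limit {d m : ℕ} (p : ℝ≥0∞) (hp : 1 ≤ p)
    (W : EuclideanSpace ℝ (Fin d) → Matrix (Fin m) (Fin d) ℝ → ℝ≥0∞)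
    (hWmeas : Measurable (Function.uncurry W))
    (hWper : ∀ (x : EuclideanSpace ℝ (Fin d)) (z : Fin d → ℤ) (ξ : Matrix (Fin m) (Fin d) ℝ),
      W (x + (WithLp.equiv 2 (Fin d → ℝ)).symm fun i => (z i : ℝ)) ξ = W x ξ)
    (G : Matrix (Fin m) (Fin d) ℝ → ℝ≥0∞) (hGmeas : Measurable G)
    (β : ℝ≥0∞) (hβ : 0 < β) (hβ' : β ≠ ⊤)
    (hgrowth : ∀ x ξ, W x ξ ≤ β * (1 + G ξ))
    (ξ : Matrix (Fin m) (Fin d) ℝ) :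
    (∀ A B C : Set (EuclideanSpace ℝ (Fin d)),
        IsOpen A → IsBounded A → IsOpen B → IsOpen C → B ⊆ A → C ⊆ A → Disjoint B C →
        volume (A \ (B ∪ C)) = 0 →
        dirichletSetFn p W ξ A ≤ dirichletSetFn p W ξ B + dirichletSetFn p W ξ C) ∧
    (∀ (A : Set (EuclideanSpace ℝ (Fin d))) (z : Fin d → ℤ), IsOpen A → IsBounded A →
        dirichletSetFn p W ξ
            ((fun x => x + (WithLp.equiv 2 (Fin d → ℝ)).symm fun i => (z i : ℝ)) '' A)
          = dirichletSetFn p W ξ A) ∧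
    (∀ A : Set (EuclideanSpace ℝ (Fin d)), IsOpen A → IsBounded A →
        dirichletSetFn p W ξ A ≤ β * (1 + G ξ) * volume A) ∧
    (G ξ < ⊤ → ∀ Q : Set (EuclideanSpace ℝ (Fin d)),
      (∃ (x₀ : EuclideanSpace ℝ (Fin d)) (r : ℝ), 0 < r ∧
        Q = {y | ∀ i, y i ∈ Set.Ioo (x₀ i) (x₀ i + r)}) →
      Tendsto (fun ε : ℝ => dirichletSetFn p W ξ ((1/ε) • Q) / volume ((1/ε) • Q))
        (nhdsWithin 0 (Set.Ioi 0))
        (nhds (⨅ k : ℕ, ⨅ _ : 1 ≤ k, dirichletSetFn p W ξ (cube d k) / (k : ℝ≥0∞) ^ d))) := by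
  refine ⟨?_, ?_, ?_, ?_⟩
  · intro A B C _ _ hBo hCo hBA hCA hdisj hnull
    exact dirichlet_subadd p W ξ hWmeas A B C hBo hCo hBA hCA hdisj hnull
  · intro A z _ _
    exact dirichlet_translate_eq p W ξ hWper A z
  · intro A _ _
    exact dirichlet_bound p W ξ G β hgrowth A
  · intro hGξ Q hQ
    obtain ⟨x₀, r, hr, rfl⟩ := hQ
    have hc : β * (1 + G ξ) ≠ ⊤ :=
      ENNReal.mul_ne_top hβ' (ENNReal.add_ne_top.mpr ⟨ENNReal.one_ne_top, hGξ.ne⟩)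
    exact abstract_limit
      (fun A B C _ _ hBo hCo hBA hCA hdisj hnull =>
        dirichlet_subadd p W ξ hWmeas A B C hBo hCo hBA hCA hdisj hnull)
      (fun A z _ _ => dirichlet_translate_eq p W ξ hWper A z)
      (fun A _ _ => dirichlet_bound p W ξ G β hgrowth A)
      hc x₀ r hr
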